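/- Let φ be a purely imaginary unit quaternion and let x, y be purely imaginary quaternions. Writing [x, φ] = xφ − φx and ⟨x, φ⟩ = −½(xφ + φx) (a real number), the following identity holds: x·y − y·x = ¼·([x, φ]·[y, φ] − [y, φ]·[x, φ]) − (⟨x, φ⟩·[y, φ] − ⟨y, φ⟩·[x, φ]). (This is the pointwise form of the decomposition of the 2-form a ∧ a used in the proof that the weak limit of a minimizing sequence of flat connections is flat.) -/
import Mathlib


open Quaternion

/-- For a purely imaginary unit quaternion `φ` and purely imaginary quaternions
`x, y`, with `[x, φ] = xφ − φx` and `⟨x, φ⟩ = -½ Re(xφ + φx)`: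
`xy − yx = ¼([x,φ][y,φ] − [y,φ][x,φ]) − (⟨x,φ⟩[y,φ] − ⟨y,φ⟩[x,φ])`.
This is the pointwise form of the decomposition of `a ∧ a` used in the proof
that the weak limit of a minimizing sequence of flat connections is flat. -/
theorem commutator_decomposition (φ x y : ℍ[ℝ])
    (hφ_im : φ.re = 0) (hφ : ‖φ‖ = 1) (hx : x.re = 0) (hy : y.re = 0) :
    x * y - y * x =
      (1 / 4 : ℝ) • ((x * φ - φ * x) * (y * φ - φ * y)
          - (y * φ - φ * y) * (x * φ - φ * x))
      - ((-(1 / 2) * (x * φ + φ * x).re) • (y * φ - φ * y)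
          - (-(1 / 2) * (y * φ + φ * y).re) • (x * φ - φ * x)) := by
  have h0 : Quaternion.normSq φ = 1 := by
    rw [Quaternion.normSq_eq_norm_mul_self, hφ]; norm_num
  rw [Quaternion.normSq_def'] at h0
  have h1 : φ.imI ^ 2 + φ.imJ ^ 2 + φ.imK ^ 2 = 1 := by
    rw [hφ_im] at h0; nlinarith [h0]
  ext
  · simp [Quaternion.re_mul, Quaternion.imI_mul, Quaternion.imJ_mul,
      Quaternion.imK_mul, hφ_im, hx, hy]
    ring
  · simp [Quaternion.re_mul, Quaternion.imI_mul, Quaternion.imJ_mul,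
      Quaternion.imK_mul, hφ_im, hx, hy]
    linear_combination ((2:ℝ)*x.imK*y.imJ + (-2:ℝ)*x.imJ*y.imK) * h1
  · simp [Quaternion.re_mul, Quaternion.imI_mul, Quaternion.imJ_mul,
      Quaternion.imK_mul, hφ_im, hx, hy]
    linear_combination ((-2:ℝ)*x.imK*y.imI + (2:ℝ)*x.imI*y.imK) * h1
  · simp [Quaternion.re_mul, Quaternion.imI_mul, Quaternion.imJ_mul,
      Quaternion.imK_mul, hφ_im, hx, hy]
    linear_combination ((2:ℝ)*x.imJ*y.imI + (-2:ℝ)*x.imI*y.imJ) * h1
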